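/- Let f₁,…,f_p:[a,b]→ℝ be continuous and let 0≤i≤p. For each subset S⊆{1,…,p} of cardinality i, let (j₁^S,…,j_p^S) be the permutation of (1,…,p) that places 1,…,i (in this order) at the positions of S and i+1,…,p (in this order) at the complementary positions. Then (∫_a^b f₁dt⋯f_idt)·(∫_a^b f_{i+1}dt⋯f_pdt) = Σ_{S⊆{1,…,p}, |S|=i} ∫_a^b f_{j₁^S}dt⋯f_{j_p^S}dt. In particular, the product of two iterated integrals of the functions f₁,…,f_p is a linear combination of iterated integrals ∫_a^b f_{i₁}dt⋯f_{i_p}dt. -/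

import Mathlib

open Set
noncomputable section
namespace ChenPaper

/-- `itIntAux a [f_q, …, f₁] b = ∫_a^b f₁dt⋯f_qdt` (note the reversed list). -/
def itIntAux (a : ℝ) : List (ℝ → ℝ) → ℝ → ℝ
  | [], _ => 1
  | f :: fs, b => ∫ s in a..b, itIntAux a fs s * f s

/-- The iterated integral `∫_a^b f₁dt f₂dt ⋯ f_qdt`, for `fs = [f₁, …, f_q]`;
the empty iterated integral equals `1`. -/
def iterIntFns (a : ℝ) (fs : List (ℝ → ℝ)) (b : ℝ) : ℝ := itIntAux a fs.reverse b

/-- The shuffle permutation attached to a subset `S ⊆ Fin p`: the position `t` receives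
the index `r` if `t` is the `r`-th smallest element of `S` (`r < S.card`), and the index
`S.card + r` if `t` is the `r`-th smallest element of the complement of `S`. -/
def shuffPerm {p : ℕ} (S : Finset (Fin p)) (t : Fin p) : Fin p :=
  if h : t ∈ S then
    ⟨((S.orderIsoOfFin rfl).symm ⟨t, h⟩ : Fin S.card), by
      have h1 : (((S.orderIsoOfFin rfl).symm ⟨t, h⟩ : Fin S.card) : ℕ) < S.card :=
        Fin.isLt _
      have h2 : S.card ≤ Fintype.card (Fin p) := S.card_le_univ
      simp only [Fintype.card_fin] at h2
      omega⟩
  else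
    ⟨S.card + ((Sᶜ.orderIsoOfFin rfl).symm ⟨t, Finset.mem_compl.mpr h⟩ : Fin Sᶜ.card), by
      have h1 : (((Sᶜ.orderIsoOfFin rfl).symm ⟨t, Finset.mem_compl.mpr h⟩ :
          Fin Sᶜ.card) : ℕ) < Sᶜ.card := Fin.isLt _
      have h2 : S.card + Sᶜ.card = Fintype.card (Fin p) := S.card_add_card_compl
      simp only [Fintype.card_fin] at h2
      omega⟩



lemma rank_eq {p : ℕ} (S : Finset (Fin p)) {t : Fin p} (ht : t ∈ S) :
    (((S.orderIsoOfFin rfl).symm ⟨t, ht⟩ : Fin S.card) : ℕ) = (S.filter (· < t)).card := by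
  set e := S.orderEmbOfFin rfl with he
  set r := (S.orderIsoOfFin rfl).symm ⟨t, ht⟩ with hr
  have het : e r = t := by
    have := S.coe_orderIsoOfFin_apply rfl r
    rw [hr, OrderIso.apply_symm_apply] at this
    exact this.symm
  have : S.filter (· < t) = (Finset.Iio r).image e := by
    ext x
    simp only [Finset.mem_filter, Finset.mem_image, Finset.mem_Iio]
    constructor
    · rintro ⟨hxS, hxt⟩
      have : x ∈ Set.range e := by rw [S.range_orderEmbOfFin rfl]; exact hxS
      obtain ⟨j, hj⟩ := this
      exact ⟨j, by rw [← e.strictMono.lt_iff_lt (a := j) (b := r), het, hj] at *; exact ⟨hxt, hj⟩⟩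
    · rintro ⟨j, hjr, rfl⟩
      exact ⟨S.orderEmbOfFin_mem rfl j, het ▸ e.strictMono hjr⟩
  rw [this, Finset.card_image_of_injective _ e.injective, Fin.card_Iio]

lemma shuffPerm_val {p : ℕ} (S : Finset (Fin p)) (t : Fin p) :
    (shuffPerm S t : ℕ) =
      if t ∈ S then (S.filter (· < t)).card else S.card + (Sᶜ.filter (· < t)).card := by
  rw [shuffPerm]
  split
  · simp only [Fin.val_mk]; exact rank_eq S ‹_›
  · simp only [Fin.val_mk]; rw [rank_eq]

lemma rk_lt_card {p : ℕ} {S : Finset (Fin p)} {t : Fin p} (ht : t ∈ S) :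
    (S.filter (· < t)).card < S.card :=
  Finset.card_lt_card <| (Finset.ssubset_iff_of_subset (Finset.filter_subset _ _)).mpr
    ⟨t, ht, by simp⟩

variable {q : ℕ}

def ΦA (S' : Finset (Fin q)) : Finset (Fin (q + 1)) :=
  insert (Fin.last q) (S'.map Fin.castSuccEmb)

def ΦB (S' : Finset (Fin q)) : Finset (Fin (q + 1)) := S'.map Fin.castSuccEmb

lemma mem_ΦB_castSucc (S' : Finset (Fin q)) (t : Fin q) :
    t.castSucc ∈ ΦB S' ↔ t ∈ S' := by
  rw [ΦB, Finset.mem_map]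
  constructor
  · rintro ⟨u, hu, he⟩
    have : u.castSucc = t.castSucc := he
    rwa [Fin.castSucc_inj.mp this] at hu
  · intro h; exact ⟨t, h, rfl⟩

lemma mem_ΦA_castSucc (S' : Finset (Fin q)) (t : Fin q) :
    t.castSucc ∈ ΦA S' ↔ t ∈ S' := by
  rw [ΦA, Finset.mem_insert, show (Finset.map Fin.castSuccEmb S') = ΦB S' from rfl,
    mem_ΦB_castSucc]
  simp [(Fin.castSucc_lt_last t).ne]

lemma mem_ΦA_last (S' : Finset (Fin q)) : Fin.last q ∈ ΦA S' := Finset.mem_insert_self _ _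

lemma not_mem_ΦB_last (S' : Finset (Fin q)) : Fin.last q ∉ ΦB S' := by
  simp only [ΦB, Finset.mem_map]
  rintro ⟨u, _, hu⟩
  exact (Fin.castSucc_lt_last u).ne (by exact hu)

lemma card_ΦA (S' : Finset (Fin q)) : (ΦA S').card = S'.card + 1 := by
  rw [ΦA, Finset.card_insert_of_notMem, Finset.card_map]
  intro h
  obtain ⟨u, _, hu⟩ := Finset.mem_map.mp h
  exact (Fin.castSucc_lt_last u).ne (by exact hu)

lemma card_ΦB (S' : Finset (Fin q)) : (ΦB S').card = S'.card := Finset.card_map _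

lemma compl_ΦB (S' : Finset (Fin q)) : (ΦB S')ᶜ = ΦA S'ᶜ := by
  ext x
  induction x using Fin.lastCases with
  | last => simp [not_mem_ΦB_last, mem_ΦA_last]
  | cast t => simp [Finset.mem_compl, mem_ΦB_castSucc, mem_ΦA_castSucc]

lemma compl_ΦA (S' : Finset (Fin q)) : (ΦA S')ᶜ = ΦB S'ᶜ := by
  rw [← compl_compl (ΦB S'ᶜ), compl_ΦB, compl_compl]

lemma filter_ΦA_castSucc (S' : Finset (Fin q)) (t : Fin q) :
    (ΦA S').filter (· < t.castSucc) = ΦB (S'.filter (· < t)) := by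
  ext x
  induction x using Fin.lastCases with
  | last => simp [mem_ΦA_last, not_mem_ΦB_last, (Fin.le_last t.castSucc).not_gt]
  | cast u => simp [mem_ΦA_castSucc, mem_ΦB_castSucc, Fin.castSucc_lt_castSucc_iff]

lemma filter_ΦB_castSucc (S' : Finset (Fin q)) (t : Fin q) :
    (ΦB S').filter (· < t.castSucc) = ΦB (S'.filter (· < t)) := by
  ext x
  induction x using Fin.lastCases with
  | last => simp [not_mem_ΦB_last]
  | cast u => simp [mem_ΦB_castSucc, Fin.castSucc_lt_castSucc_iff]

lemma filter_ΦA_last (S' : Finset (Fin q)) :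
    (ΦA S').filter (· < Fin.last q) = ΦB S' := by
  ext x
  induction x using Fin.lastCases with
  | last => simp [not_mem_ΦB_last]
  | cast u => simp [mem_ΦA_castSucc, mem_ΦB_castSucc, Fin.castSucc_lt_last]

lemma filter_ΦB_last (S' : Finset (Fin q)) :
    (ΦB S').filter (· < Fin.last q) = ΦB S' := by
  ext x
  induction x using Fin.lastCases with
  | last => simp [not_mem_ΦB_last]
  | cast u => simp [mem_ΦB_castSucc, Fin.castSucc_lt_last]

lemma card_le_q (S' : Finset (Fin q)) : S'.card ≤ q := by
  simpa using S'.card_le_univ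

lemma shuffPerm_A_last (S' : Finset (Fin q)) :
    shuffPerm (ΦA S') (Fin.last q) = ⟨S'.card, Nat.lt_succ_of_le (card_le_q S')⟩ := by
  apply Fin.ext
  rw [shuffPerm_val, if_pos (mem_ΦA_last S'), filter_ΦA_last, card_ΦB]

lemma shuffPerm_B_last (S' : Finset (Fin q)) :
    shuffPerm (ΦB S') (Fin.last q) = Fin.last q := by
  apply Fin.ext
  rw [shuffPerm_val, if_neg (not_mem_ΦB_last S'), compl_ΦB, filter_ΦA_last, card_ΦB, card_ΦB]
  have := S'.card_add_card_compl
  simp only [Fintype.card_fin] at this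
  simp only [Fin.val_last]
  omega

lemma shuffPerm_A_castSucc (S' : Finset (Fin q)) (t : Fin q) :
    shuffPerm (ΦA S') t.castSucc =
      (⟨S'.card, Nat.lt_succ_of_le (card_le_q S')⟩ : Fin (q + 1)).succAbove (shuffPerm S' t) := by
  apply Fin.ext
  by_cases ht : t ∈ S'
  · have h1 : (shuffPerm S' t : ℕ) = (S'.filter (· < t)).card := by
      rw [shuffPerm_val, if_pos ht]
    have h2 : (shuffPerm S' t : ℕ) < S'.card := h1 ▸ rk_lt_card ht
    rw [Fin.succAbove_of_castSucc_lt _ _ (by simpa [Fin.lt_def] using h2)]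
    rw [shuffPerm_val, if_pos ((mem_ΦA_castSucc S' t).mpr ht), filter_ΦA_castSucc, card_ΦB,
      Fin.coe_castSucc, h1]
  · have h1 : (shuffPerm S' t : ℕ) = S'.card + (S'ᶜ.filter (· < t)).card := by
      rw [shuffPerm_val, if_neg ht]
    rw [Fin.succAbove_of_le_castSucc _ _ (by simp [Fin.le_def, h1])]
    rw [shuffPerm_val, if_neg (by simpa using (mem_ΦA_castSucc S' t).not.mpr ht), compl_ΦA,
      filter_ΦB_castSucc, card_ΦB, card_ΦA, Fin.val_succ, h1]
    omega

lemma shuffPerm_B_castSucc (S' : Finset (Fin q)) (t : Fin q) :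
    shuffPerm (ΦB S') t.castSucc = (shuffPerm S' t).castSucc := by
  apply Fin.ext
  by_cases ht : t ∈ S'
  · rw [shuffPerm_val, if_pos ((mem_ΦB_castSucc S' t).mpr ht), filter_ΦB_castSucc, card_ΦB,
      Fin.coe_castSucc, shuffPerm_val, if_pos ht]
  · rw [shuffPerm_val, if_neg (by simpa using (mem_ΦB_castSucc S' t).not.mpr ht), compl_ΦB,
      filter_ΦA_castSucc, card_ΦB, card_ΦB, Fin.coe_castSucc, shuffPerm_val, if_neg ht]

lemma shuffPerm_empty {p : ℕ} (t : Fin p) : shuffPerm ∅ t = t := by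
  apply Fin.ext
  rw [shuffPerm_val, if_neg (Finset.notMem_empty t), Finset.compl_empty,
    show Finset.filter (· < t) (Finset.univ : Finset (Fin p)) = Finset.Iio t from by ext x; simp,
    Fin.card_Iio]
  simp

lemma shuffPerm_univ {p : ℕ} (t : Fin p) : shuffPerm Finset.univ t = t := by
  apply Fin.ext
  rw [shuffPerm_val, if_pos (Finset.mem_univ t),
    show Finset.filter (· < t) (Finset.univ : Finset (Fin p)) = Finset.Iio t from by ext x; simp,
    Fin.card_Iio]

def Ψ (S : Finset (Fin (q + 1))) : Finset (Fin q) :=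
  Finset.univ.filter (fun t => t.castSucc ∈ S)

lemma ΦA_Ψ {S : Finset (Fin (q + 1))} (hS : Fin.last q ∈ S) : ΦA (Ψ S) = S := by
  ext x
  induction x using Fin.lastCases with
  | last => simp [mem_ΦA_last, hS]
  | cast u => simp [mem_ΦA_castSucc, Ψ]

lemma ΦB_Ψ {S : Finset (Fin (q + 1))} (hS : Fin.last q ∉ S) : ΦB (Ψ S) = S := by
  ext x
  induction x using Fin.lastCases with
  | last => simp [not_mem_ΦB_last, hS]
  | cast u => simp [mem_ΦB_castSucc, Ψ]

lemma Ψ_ΦA (S' : Finset (Fin q)) : Ψ (ΦA S') = S' := by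
  ext t; simp [Ψ, mem_ΦA_castSucc]

lemma Ψ_ΦB (S' : Finset (Fin q)) : Ψ (ΦB S') = S' := by
  ext t; simp [Ψ, mem_ΦB_castSucc]


lemma itIntAux_cons (a : ℝ) (f : ℝ → ℝ) (fs : List (ℝ → ℝ)) :
    itIntAux a (f :: fs) = fun b => ∫ s in a..b, itIntAux a fs s * f s := by
  funext b; simp [itIntAux]

lemma itIntAux_continuous (a : ℝ) (fs : List (ℝ → ℝ)) (h : ∀ f ∈ fs, Continuous f) :
    Continuous (itIntAux a fs) := by
  induction fs with
  | nil => exact continuous_const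
  | cons f fs ih =>
      have hint : Continuous fun s => itIntAux a fs s * f s :=
        (ih fun g hg => h g (List.mem_cons_of_mem _ hg)).mul (h f List.mem_cons_self)
      rw [itIntAux_cons]
      exact intervalIntegral.continuous_primitive
        (fun u v => hint.intervalIntegrable u v) a

lemma itIntAux_hasDerivAt (a : ℝ) (f : ℝ → ℝ) (fs : List (ℝ → ℝ))
    (h : ∀ g ∈ fs, Continuous g) (hf : Continuous f) (x : ℝ) :
    HasDerivAt (itIntAux a (f :: fs)) (itIntAux a fs x * f x) x := by
  have hint : Continuous fun s => itIntAux a fs s * f s := (itIntAux_continuous a fs h).mul hf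
  rw [itIntAux_cons]
  exact intervalIntegral.integral_hasDerivAt_right (hint.intervalIntegrable a x)
    (hint.stronglyMeasurableAtFilter _ _) hint.continuousAt

lemma iterIntFns_concat (a : ℝ) (fs : List (ℝ → ℝ)) (g : ℝ → ℝ) (b : ℝ) :
    iterIntFns a (fs.concat g) b = ∫ s in a..b, iterIntFns a fs s * g s := by
  simp only [iterIntFns, List.concat_eq_append, List.reverse_append, List.reverse_cons,
    List.reverse_nil, List.nil_append, List.singleton_append, itIntAux_cons]

lemma iterIntFns_hasDerivAt (a : ℝ) (fs : List (ℝ → ℝ)) (g : ℝ → ℝ)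
    (h : ∀ f ∈ fs, Continuous f) (hg : Continuous g) (x : ℝ) :
    HasDerivAt (iterIntFns a (fs.concat g)) (iterIntFns a fs x * g x) x := by
  have : iterIntFns a (fs.concat g) = itIntAux a (g :: fs.reverse) := by
    funext b; simp [iterIntFns, List.concat_eq_append]
  rw [this]
  exact itIntAux_hasDerivAt a g fs.reverse (fun f hf => h f (List.mem_reverse.mp hf)) hg x

lemma iterIntFns_nil (a b : ℝ) : iterIntFns a [] b = 1 := rfl

lemma iterIntFns_left (a : ℝ) (fs : List (ℝ → ℝ)) (hfs : fs ≠ []) :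
    iterIntFns a fs a = 0 := by
  rcases List.eq_nil_or_concat fs with rfl | ⟨l, g, rfl⟩
  · exact absurd rfl hfs
  · rw [iterIntFns_concat, intervalIntegral.integral_same]

lemma eq_of_hasDerivAt_eq {F G d : ℝ → ℝ} (hF : ∀ x, HasDerivAt F (d x) x)
    (hG : ∀ x, HasDerivAt G (d x) x) {a : ℝ} (ha : F a = G a) (b : ℝ) : F b = G b := by
  have h : ∀ x, HasDerivAt (fun y => F y - G y) 0 x := fun x => by have := (hF x).sub (hG x); rwa [sub_self] at this
  have := is_const_of_deriv_eq_zero (f := fun y => F y - G y)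
    (fun x => (h x).differentiableAt) (fun x => (h x).deriv) b a
  linarith

lemma itIntAux_congr {a b : ℝ} (hab : a ≤ b) {fs gs : List (ℝ → ℝ)}
    (h : List.Forall₂ (fun f g => EqOn f g (Icc a b)) fs gs) :
    ∀ x ∈ Icc a b, itIntAux a fs x = itIntAux a gs x := by
  induction h with
  | nil => intro x _; rfl
  | @cons f g fs gs hfg _ ih =>
      intro x hx
      rw [itIntAux_cons, itIntAux_cons]
      refine intervalIntegral.integral_congr fun s hs => ?_
      have hsub : uIcc a x ⊆ Icc a b := by
        rw [uIcc_of_le hx.1]; exact Icc_subset_Icc le_rfl hx.2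
      have hs' := hsub hs
      rw [ih s hs', hfg hs']

lemma forall₂_ofFn {n : ℕ} {R : (ℝ → ℝ) → (ℝ → ℝ) → Prop} (u v : Fin n → ℝ → ℝ)
    (h : ∀ i, R (u i) (v i)) : List.Forall₂ R (List.ofFn u) (List.ofFn v) := by
  induction n with
  | zero => simp
  | succ n ih =>
      rw [List.ofFn_succ, List.ofFn_succ]
      exact List.Forall₂.cons (h 0) (ih _ _ fun i => h i.succ)

lemma iterIntFns_congr {a b : ℝ} (hab : a ≤ b) {fs gs : List (ℝ → ℝ)}
    (h : List.Forall₂ (fun f g => EqOn f g (Icc a b)) fs gs) {x : ℝ} (hx : x ∈ Icc a b) :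
    iterIntFns a fs x = iterIntFns a gs x :=
  itIntAux_congr hab (List.rel_reverse h) x hx

lemma ofFn_eq_concat {α : Type*} {n m : ℕ} (h : n = m + 1) (u : Fin n → α) :
    List.ofFn u = (List.ofFn fun j : Fin m => u ⟨j, by omega⟩).concat (u ⟨m, by omega⟩) := by
  subst h
  rw [List.ofFn_succ']
  rfl

lemma ofFn_congr {α : Type*} {n m : ℕ} (h : n = m) (u : Fin n → α) (v : Fin m → α)
    (hv : ∀ j : Fin m, u ⟨j, by omega⟩ = v j) : List.ofFn u = List.ofFn v := by
  subst h
  congr 1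
  funext j
  have := hv j
  rwa [Fin.eta] at this

lemma cont_ofFn {n : ℕ} (u : Fin n → ℝ → ℝ) (h : ∀ j, Continuous (u j)) :
    ∀ g ∈ List.ofFn u, Continuous g := fun g hg => by
  obtain ⟨j, rfl⟩ := List.mem_ofFn.mp hg
  exact h j
lemma ofFn_ne_nil {n : ℕ} (hn : n ≠ 0) (u : Fin n → ℝ → ℝ) : List.ofFn u ≠ [] := by
  intro h
  apply hn
  simpa using congrArg List.length h

lemma main_zero (p : ℕ) (a : ℝ) (f : Fin p → ℝ → ℝ) (b : ℝ) :
    iterIntFns a (List.ofFn fun m : Fin 0 => f (Fin.castLE (Nat.zero_le p) m)) b *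
      iterIntFns a (List.ofFn fun m : Fin (p - 0) =>
        f ⟨0 + m.val, by have := m.isLt; omega⟩) b =
    ∑ S ∈ Finset.powersetCard 0 (Finset.univ : Finset (Fin p)),
      iterIntFns a (List.ofFn fun t : Fin p => f (shuffPerm S t)) b := by
  rw [List.ofFn_zero, iterIntFns_nil, one_mul, Finset.powersetCard_zero, Finset.sum_singleton]
  congr 1
  refine ofFn_congr (by omega) _ _ fun j => ?_
  rw [shuffPerm_empty]
  exact congrArg f (Fin.ext (by simp))

lemma main_self (p : ℕ) (a : ℝ) (f : Fin p → ℝ → ℝ) (b : ℝ) :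
    iterIntFns a (List.ofFn fun m : Fin p => f (Fin.castLE (le_refl p) m)) b *
      iterIntFns a (List.ofFn fun m : Fin (p - p) =>
        f ⟨p + m.val, by have := m.isLt; omega⟩) b =
    ∑ S ∈ Finset.powersetCard p (Finset.univ : Finset (Fin p)),
      iterIntFns a (List.ofFn fun t : Fin p => f (shuffPerm S t)) b := by
  have h2 : (List.ofFn fun m : Fin (p - p) =>
      f ⟨p + m.val, by have := m.isLt; omega⟩) = [] := by
    rw [← List.length_eq_zero_iff, List.length_ofFn]
    omega
  have h3 : Finset.powersetCard p (Finset.univ : Finset (Fin p)) = {Finset.univ} := by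
    have := Finset.powersetCard_self (Finset.univ : Finset (Fin p))
    rwa [Finset.card_fin] at this
  rw [h2, iterIntFns_nil, mul_one, h3, Finset.sum_singleton]
  congr 1
  refine ofFn_congr rfl _ _ fun j => ?_
  rw [shuffPerm_univ]
  exact congrArg f (Fin.ext rfl)

theorem main_cont : ∀ (p i : ℕ) (hi : i ≤ p) (a : ℝ) (f : Fin p → ℝ → ℝ),
    (∀ m, Continuous (f m)) → ∀ b : ℝ,
    iterIntFns a (List.ofFn fun m : Fin i => f (Fin.castLE hi m)) b *
      iterIntFns a (List.ofFn fun m : Fin (p - i) =>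
        f ⟨i + m.val, by omega⟩) b =
    ∑ S ∈ Finset.powersetCard i (Finset.univ : Finset (Fin p)),
      iterIntFns a (List.ofFn fun t : Fin p => f (shuffPerm S t)) b := by
  intro p
  induction p with
  | zero =>
      intro i hi a f hf b
      have h0 : i = 0 := Nat.le_zero.mp hi
      subst h0
      exact main_zero 0 a f b
  | succ q IH =>
      intro i hi a f hf b
      rcases Nat.eq_zero_or_pos i with rfl | hpos
      · exact main_zero (q + 1) a f b
      by_cases hip : i = q + 1
      · subst hip
        exact main_self (q + 1) a f b
      obtain ⟨i', rfl⟩ : ∃ i', i = i' + 1 := ⟨i - 1, by omega⟩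
      have hiq : i' + 1 ≤ q := by omega
      have hi'q : i' ≤ q := by omega
      have hcA : i' < q + 1 := by omega
      -- abbreviations (inline spellings)
      -- cA := (⟨i', hcA⟩ : Fin (q+1))
      -- L1 := List.ofFn fun m : Fin i' => f ⟨m.val, by omega⟩
      -- g1 := f ⟨i', hcA⟩
      -- L2 := List.ofFn fun m : Fin (q - (i'+1)) => f ⟨i' + 1 + m.val, by omega⟩
      -- g2 := f (Fin.last q)
      have hsplit1 : (List.ofFn fun m : Fin (i' + 1) => f (Fin.castLE hi m)) =
          (List.ofFn fun m : Fin i' => f ⟨m.val, by omega⟩).concat (f ⟨i', hcA⟩) :=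
        ofFn_eq_concat rfl _
      have hsplit2 : (List.ofFn fun m : Fin (q + 1 - (i' + 1)) =>
            f ⟨i' + 1 + m.val, by have := m.isLt; omega⟩) =
          (List.ofFn fun m : Fin (q - (i' + 1)) =>
            f ⟨i' + 1 + m.val, by omega⟩).concat (f (Fin.last q)) := by
        rw [ofFn_eq_concat (show q + 1 - (i' + 1) = q - (i' + 1) + 1 by omega)]
        exact congrArg₂ List.concat rfl
          (congrArg f (Fin.ext (show i' + 1 + (q - (i' + 1)) = q by omega)))
      -- the two IH instances, with lists rewritten
      have EA : ∀ x : ℝ, iterIntFns a (List.ofFn fun m : Fin i' => f ⟨m.val, by omega⟩) x *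
          iterIntFns a ((List.ofFn fun m : Fin (q - (i' + 1)) =>
            f ⟨i' + 1 + m.val, by omega⟩).concat (f (Fin.last q))) x =
          ∑ S' ∈ Finset.powersetCard i' (Finset.univ : Finset (Fin q)),
            iterIntFns a (List.ofFn fun t : Fin q =>
              f ((⟨i', hcA⟩ : Fin (q + 1)).succAbove (shuffPerm S' t))) x := by
        intro x
        have H : iterIntFns a (List.ofFn fun m : Fin i' =>
              f ((⟨i', hcA⟩ : Fin (q + 1)).succAbove (Fin.castLE hi'q m))) x *
            iterIntFns a (List.ofFn fun m : Fin (q - i') =>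
              f ((⟨i', hcA⟩ : Fin (q + 1)).succAbove ⟨i' + m.val, by have := m.isLt; omega⟩)) x =
            ∑ S' ∈ Finset.powersetCard i' (Finset.univ : Finset (Fin q)),
              iterIntFns a (List.ofFn fun t : Fin q =>
                f ((⟨i', hcA⟩ : Fin (q + 1)).succAbove (shuffPerm S' t))) x :=
          IH i' hi'q a (fun m => f ((⟨i', hcA⟩ : Fin (q + 1)).succAbove m)) (fun m => hf _) x
        have e1 : (List.ofFn fun m : Fin i' =>
            f ((⟨i', hcA⟩ : Fin (q + 1)).succAbove (Fin.castLE hi'q m))) =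
            (List.ofFn fun m : Fin i' => f ⟨m.val, by omega⟩) := by
          refine ofFn_congr rfl _ _ fun j => ?_
          refine congrArg f ?_
          rw [Fin.succAbove_of_castSucc_lt _ _ (show ((Fin.castLE hi'q ⟨j.val, by omega⟩).castSucc : Fin (q+1)) < ⟨i', hcA⟩ from j.isLt)]
          exact Fin.ext rfl
        have e2 : (List.ofFn fun m : Fin (q - i') =>
            f ((⟨i', hcA⟩ : Fin (q + 1)).succAbove ⟨i' + m.val, by have := m.isLt; omega⟩)) =
            (List.ofFn fun m : Fin (q - (i' + 1)) =>
              f ⟨i' + 1 + m.val, by omega⟩).concat (f (Fin.last q)) := by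
          rw [ofFn_eq_concat (show q - i' = q - (i' + 1) + 1 by omega)]
          refine congrArg₂ List.concat ?_ ?_
          · refine ofFn_congr rfl _ _ fun j => ?_
            refine congrArg f ?_
            rw [Fin.succAbove_of_le_castSucc _ _ (show ((⟨i', hcA⟩ : Fin (q+1))) ≤ (⟨i' + j.val, by omega⟩ : Fin q).castSucc from Nat.le_add_right i' j.val)]
            exact Fin.ext (show i' + j.val + 1 = i' + 1 + j.val by omega)
          · refine congrArg f ?_
            rw [Fin.succAbove_of_le_castSucc _ _ (show ((⟨i', hcA⟩ : Fin (q+1))) ≤ (⟨i' + (q - (i' + 1)), by omega⟩ : Fin q).castSucc from Nat.le_add_right i' _)]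
            exact Fin.ext (show i' + (q - (i' + 1)) + 1 = q by omega)
        rw [e1, e2] at H
        exact H
      have EB : ∀ x : ℝ, iterIntFns a (List.ofFn fun m : Fin (i' + 1) => f (Fin.castLE hi m)) x *
          iterIntFns a (List.ofFn fun m : Fin (q - (i' + 1)) => f ⟨i' + 1 + m.val, by omega⟩) x =
          ∑ S' ∈ Finset.powersetCard (i' + 1) (Finset.univ : Finset (Fin q)),
            iterIntFns a (List.ofFn fun t : Fin q => f (shuffPerm S' t).castSucc) x := by
        intro x
        have H : iterIntFns a (List.ofFn fun m : Fin (i' + 1) =>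
              f (Fin.castLE hiq m).castSucc) x *
            iterIntFns a (List.ofFn fun m : Fin (q - (i' + 1)) =>
              f (⟨i' + 1 + m.val, by have := m.isLt; omega⟩ : Fin q).castSucc) x =
            ∑ S' ∈ Finset.powersetCard (i' + 1) (Finset.univ : Finset (Fin q)),
              iterIntFns a (List.ofFn fun t : Fin q => f (shuffPerm S' t).castSucc) x :=
          IH (i' + 1) hiq a (fun m => f m.castSucc) (fun m => hf _) x
        have e1 : (List.ofFn fun m : Fin (i' + 1) => f (Fin.castLE hiq m).castSucc) =
            (List.ofFn fun m : Fin (i' + 1) => f (Fin.castLE hi m)) := by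
          refine ofFn_congr rfl _ _ fun j => congrArg f (Fin.ext rfl)
        have e2 : (List.ofFn fun m : Fin (q - (i' + 1)) =>
            f (⟨i' + 1 + m.val, by have := m.isLt; omega⟩ : Fin q).castSucc) =
            (List.ofFn fun m : Fin (q - (i' + 1)) => f ⟨i' + 1 + m.val, by omega⟩) := by
          refine ofFn_congr rfl _ _ fun j => congrArg f (Fin.ext rfl)
        rw [e1, e2] at H
        exact H
      -- derivatives
      have h1 : ∀ x : ℝ, HasDerivAt
          (iterIntFns a (List.ofFn fun m : Fin (i' + 1) => f (Fin.castLE hi m)))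
          (iterIntFns a (List.ofFn fun m : Fin i' => f ⟨m.val, by omega⟩) x * f ⟨i', hcA⟩ x)
          x := by
        intro x
        rw [hsplit1]
        exact iterIntFns_hasDerivAt a _ _ (cont_ofFn _ fun j => hf _) (hf _) x
      have h2 : ∀ x : ℝ, HasDerivAt
          (iterIntFns a (List.ofFn fun m : Fin (q + 1 - (i' + 1)) =>
            f ⟨i' + 1 + m.val, by have := m.isLt; omega⟩))
          (iterIntFns a (List.ofFn fun m : Fin (q - (i' + 1)) =>
            f ⟨i' + 1 + m.val, by omega⟩) x * f (Fin.last q) x) x := by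
        intro x
        rw [hsplit2]
        exact iterIntFns_hasDerivAt a _ _ (cont_ofFn _ fun j => hf _) (hf _) x
      -- the common derivative
      have hGd : ∀ x : ℝ, HasDerivAt
          (fun y => ∑ S ∈ Finset.powersetCard (i' + 1) (Finset.univ : Finset (Fin (q + 1))),
            iterIntFns a (List.ofFn fun t : Fin (q + 1) => f (shuffPerm S t)) y)
          (∑ S ∈ Finset.powersetCard (i' + 1) (Finset.univ : Finset (Fin (q + 1))),
            iterIntFns a (List.ofFn fun t : Fin q => f (shuffPerm S t.castSucc)) x *
              f (shuffPerm S (Fin.last q)) x) x := by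
        intro x
        refine HasDerivAt.fun_sum fun S _ => ?_
        have hbig : (List.ofFn fun t : Fin (q + 1) => f (shuffPerm S t)) =
            (List.ofFn fun t : Fin q => f (shuffPerm S t.castSucc)).concat
              (f (shuffPerm S (Fin.last q))) := ofFn_eq_concat rfl _
        rw [hbig]
        exact iterIntFns_hasDerivAt a _ _ (cont_ofFn _ fun j => hf _) (hf _) x
      -- key identity between the derivatives
      have key : ∀ x : ℝ,
          (iterIntFns a (List.ofFn fun m : Fin i' => f ⟨m.val, by omega⟩) x * f ⟨i', hcA⟩ x) *
            iterIntFns a (List.ofFn fun m : Fin (q + 1 - (i' + 1)) =>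
              f ⟨i' + 1 + m.val, by have := m.isLt; omega⟩) x +
          iterIntFns a (List.ofFn fun m : Fin (i' + 1) => f (Fin.castLE hi m)) x *
            (iterIntFns a (List.ofFn fun m : Fin (q - (i' + 1)) =>
              f ⟨i' + 1 + m.val, by omega⟩) x * f (Fin.last q) x) =
          ∑ S ∈ Finset.powersetCard (i' + 1) (Finset.univ : Finset (Fin (q + 1))),
            iterIntFns a (List.ofFn fun t : Fin q => f (shuffPerm S t.castSucc)) x *
              f (shuffPerm S (Fin.last q)) x := by
        intro x
        rw [← Finset.sum_filter_add_sum_filter_not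
          (Finset.powersetCard (i' + 1) (Finset.univ : Finset (Fin (q + 1))))
          (fun S => Fin.last q ∈ S)]
        have SA : ∑ S ∈ (Finset.powersetCard (i' + 1)
              (Finset.univ : Finset (Fin (q + 1)))).filter (fun S => Fin.last q ∈ S),
            iterIntFns a (List.ofFn fun t : Fin q => f (shuffPerm S t.castSucc)) x *
              f (shuffPerm S (Fin.last q)) x =
            ∑ S' ∈ Finset.powersetCard i' (Finset.univ : Finset (Fin q)),
              iterIntFns a (List.ofFn fun t : Fin q =>
                f ((⟨i', hcA⟩ : Fin (q + 1)).succAbove (shuffPerm S' t))) x * f ⟨i', hcA⟩ x := by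
          refine Finset.sum_nbij' Ψ ΦA ?_ ?_ ?_ ?_ ?_
          · intro S hS
            rw [Finset.mem_filter, Finset.mem_powersetCard_univ] at hS
            rw [Finset.mem_powersetCard_univ]
            have := congrArg Finset.card (ΦA_Ψ hS.2)
            rw [card_ΦA] at this
            omega
          · intro S' hS'
            rw [Finset.mem_powersetCard_univ] at hS'
            rw [Finset.mem_filter, Finset.mem_powersetCard_univ]
            exact ⟨by rw [card_ΦA, hS'], mem_ΦA_last S'⟩
          · intro S hS
            rw [Finset.mem_filter] at hS
            exact ΦA_Ψ hS.2
          · intro S' _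
            exact Ψ_ΦA S'
          · intro S hS
            rw [Finset.mem_filter, Finset.mem_powersetCard_univ] at hS
            have hcard : (Ψ S).card = i' := by
              have := congrArg Finset.card (ΦA_Ψ hS.2)
              rw [card_ΦA] at this
              omega
            have hmk : (⟨(Ψ S).card, Nat.lt_succ_of_le (card_le_q (Ψ S))⟩ : Fin (q + 1)) =
                (⟨i', hcA⟩ : Fin (q + 1)) := Fin.ext hcard
            nth_rewrite 1 [← ΦA_Ψ hS.2]
            nth_rewrite 2 [← ΦA_Ψ hS.2]
            rw [shuffPerm_A_last, hmk]
            congr 2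
            refine congrArg List.ofFn (funext fun t => ?_)
            rw [shuffPerm_A_castSucc, hmk]
        have SB : ∑ S ∈ (Finset.powersetCard (i' + 1)
              (Finset.univ : Finset (Fin (q + 1)))).filter (fun S => ¬ Fin.last q ∈ S),
            iterIntFns a (List.ofFn fun t : Fin q => f (shuffPerm S t.castSucc)) x *
              f (shuffPerm S (Fin.last q)) x =
            ∑ S' ∈ Finset.powersetCard (i' + 1) (Finset.univ : Finset (Fin q)),
              iterIntFns a (List.ofFn fun t : Fin q =>
                f (shuffPerm S' t).castSucc) x * f (Fin.last q) x := by
          refine Finset.sum_nbij' Ψ ΦB ?_ ?_ ?_ ?_ ?_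
          · intro S hS
            rw [Finset.mem_filter, Finset.mem_powersetCard_univ] at hS
            rw [Finset.mem_powersetCard_univ]
            have := congrArg Finset.card (ΦB_Ψ hS.2)
            rw [card_ΦB] at this
            omega
          · intro S' hS'
            rw [Finset.mem_powersetCard_univ] at hS'
            rw [Finset.mem_filter, Finset.mem_powersetCard_univ]
            exact ⟨by rw [card_ΦB, hS'], not_mem_ΦB_last S'⟩
          · intro S hS
            rw [Finset.mem_filter] at hS
            exact ΦB_Ψ hS.2
          · intro S' _
            exact Ψ_ΦB S'
          · intro S hS
            rw [Finset.mem_filter, Finset.mem_powersetCard_univ] at hS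
            nth_rewrite 1 [← ΦB_Ψ hS.2]
            nth_rewrite 2 [← ΦB_Ψ hS.2]
            rw [shuffPerm_B_last]
            congr 2
            refine congrArg List.ofFn (funext fun t => ?_)
            rw [shuffPerm_B_castSucc]
        rw [SA, SB, ← Finset.sum_mul, ← Finset.sum_mul, ← EA x, ← EB x, hsplit2]
        ring
      -- conclude by integrating
      refine eq_of_hasDerivAt_eq (a := a)
        (d := fun x => ∑ S ∈ Finset.powersetCard (i' + 1) (Finset.univ : Finset (Fin (q + 1))),
          iterIntFns a (List.ofFn fun t : Fin q => f (shuffPerm S t.castSucc)) x *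
            f (shuffPerm S (Fin.last q)) x)
        (fun x => ((h1 x).mul (h2 x)).congr_deriv (key x)) hGd ?_ b
      rw [Pi.mul_apply, iterIntFns_left a _ (ofFn_ne_nil (by omega) _), zero_mul]
      symm
      refine Finset.sum_eq_zero fun S _ => ?_
      exact iterIntFns_left a _ (ofFn_ne_nil (by omega) _)

/-- The product of the iterated integrals of `f₁,…,f_i` and of
`f_{i+1},…,f_p` over `[a,b]` equals the sum, over all subsets `S ⊆ {1,…,p}` of
cardinality `i`, of the iterated integral of the shuffle `f_{j₁^S},…,f_{j_p^S}` placing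
`f₁,…,f_i` (in order) at the positions of `S` and `f_{i+1},…,f_p` (in order) at the
complementary positions. In particular the product of two iterated integrals is a linear
combination of iterated integrals. (Functions are `0`-indexed here: `f m` is `f_{m+1}`.) -/
theorem iterInt_mul_shuffle (p i : ℕ) (hi : i ≤ p) (a b : ℝ) (hab : a ≤ b)
    (f : Fin p → ℝ → ℝ) (hf : ∀ m, ContinuousOn (f m) (Icc a b)) :
    iterIntFns a (List.ofFn fun m : Fin i => f (Fin.castLE hi m)) b *
      iterIntFns a (List.ofFn fun m : Fin (p - i) =>
        f ⟨i + m.val, by have := m.isLt; omega⟩) b =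
    ∑ S ∈ Finset.powersetCard i (Finset.univ : Finset (Fin p)),
      iterIntFns a (List.ofFn fun t : Fin p => f (shuffPerm S t)) b := by
  set g : Fin p → ℝ → ℝ := fun m x => f m (projIcc a b hab x) with hg
  have hgc : ∀ m, Continuous (g m) := fun m =>
    (hf m).comp_continuous (continuous_subtype_val.comp (continuous_projIcc))
      fun x => (projIcc a b hab x).2
  have heq : ∀ m, EqOn (f m) (g m) (Icc a b) := fun m x hx => by
    rw [hg]
    simp only [projIcc_of_mem hab hx]
  have hb : b ∈ Icc a b := ⟨hab, le_rfl⟩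
  have c1 : iterIntFns a (List.ofFn fun m : Fin i => f (Fin.castLE hi m)) b =
      iterIntFns a (List.ofFn fun m : Fin i => g (Fin.castLE hi m)) b :=
    iterIntFns_congr hab (forall₂_ofFn _ _ fun j => heq _) hb
  have c2 : iterIntFns a (List.ofFn fun m : Fin (p - i) =>
        f ⟨i + m.val, by have := m.isLt; omega⟩) b =
      iterIntFns a (List.ofFn fun m : Fin (p - i) =>
        g ⟨i + m.val, by have := m.isLt; omega⟩) b :=
    iterIntFns_congr hab (forall₂_ofFn _ _ fun j => heq _) hb
  rw [c1, c2]
  have c3 : ∀ S ∈ Finset.powersetCard i (Finset.univ : Finset (Fin p)),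
      iterIntFns a (List.ofFn fun t : Fin p => f (shuffPerm S t)) b =
      iterIntFns a (List.ofFn fun t : Fin p => g (shuffPerm S t)) b := fun S _ =>
    iterIntFns_congr hab (forall₂_ofFn _ _ fun j => heq _) hb
  rw [Finset.sum_congr rfl c3]
  exact main_cont p i hi a g hgc b

end ChenPaper
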